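/- arXiv:1408.5947 — 8 statements merged into one kernel-verified Lean document; each statement's English description precedes it below -/
import Mathlib

section
/- Under these hypotheses, the product ∘ makes V = V₀ × ℝ a unital commutative Jordan algebra: e∘u = u for all u ∈ V, the product is commutative, and the Jordan identity u∘(u²∘v) = u²∘(u∘v) holds for all u,v ∈ V (where u² := u∘u). Moreover the algebra is nondegenerate in the sense that if v∘u = 0 for all u ∈ V then v = 0. -/
/-- The product ∘ on V = V₀ × ℝ built from the Fubini–Pick form `A`,
the affine metric `g` and the affine mean curvature `L₁` makes `V` a unital
commutative Jordan algebra with unity `e = (0,1)`, and this Jordan algebra is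
nondegenerate: if `v ∘ u = 0` for all `u` then `v = 0`. -/
theorem statement0
    (V₀ : Type*) [AddCommGroup V₀] [Module ℝ V₀] [FiniteDimensional ℝ V₀]
    (g : V₀ →ₗ[ℝ] V₀ →ₗ[ℝ] ℝ)
    (hg_symm : ∀ X Y : V₀, g X Y = g Y X)
    (hg_nondeg : ∀ X : V₀, (∀ Y : V₀, g X Y = 0) → X = 0)
    (A : V₀ →ₗ[ℝ] V₀ →ₗ[ℝ] V₀)
    (hA_symm : ∀ X Y : V₀, A X Y = A Y X)
    (hA_cubic : ∀ X Y Z : V₀, g (A X Y) Z = g (A X Z) Y)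
    (L₁ : ℝ)
    (R : V₀ → V₀ → Module.End ℝ V₀)
    (hR : ∀ X Y Z : V₀,
      R X Y Z = L₁ • (g Y Z • X - g X Z • Y) - A X (A Y Z) + A Y (A X Z))
    (hRinv : ∀ X W Y Z : V₀,
      R Y Z (A X W) = A (R Y Z X) W + A X (R Y Z W))
    (mul : (V₀ × ℝ) → (V₀ × ℝ) → (V₀ × ℝ))
    (hmul : ∀ (X Y : V₀) (lam mu : ℝ),
      mul (X, lam) (Y, mu) = (A X Y + mu • X + lam • Y, lam * mu - L₁ * g X Y)) :
    (∀ u : V₀ × ℝ, mul ((0 : V₀), (1 : ℝ)) u = u) ∧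
    (∀ u v : V₀ × ℝ, mul u v = mul v u) ∧
    (∀ u v : V₀ × ℝ, mul u (mul (mul u u) v) = mul (mul u u) (mul u v)) ∧
    (∀ v : V₀ × ℝ, (∀ u : V₀ × ℝ, mul v u = 0) → v = 0) := by
  -- total symmetry of the cubic form
  have hcub : ∀ X Y Z : V₀, g (A X Y) Z = g X (A Y Z) := by
    intro X Y Z
    rw [hg_symm X (A Y Z), hA_cubic Y Z X, hA_symm Y X]
  -- the (0,4) curvature tensor
  have hRg : ∀ X Y Z W : V₀, g (R X Y Z) W =
      L₁ * (g Y Z * g X W - g X Z * g Y W)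
        - g (A X W) (A Y Z) + g (A Y W) (A X Z) := by
    intro X Y Z W
    rw [hR]
    simp only [map_sub, map_add, map_smul, LinearMap.sub_apply, LinearMap.add_apply,
      LinearMap.smul_apply, smul_eq_mul]
    rw [hA_cubic X (A Y Z) W, hA_cubic Y (A X Z) W]
  -- antisymmetry in the last two slots
  have hanti : ∀ X Y Z W : V₀, g (R X Y Z) W = - g (R X Y W) Z := by
    intro X Y Z W
    rw [hRg, hRg]
    linear_combination hg_symm (A Y W) (A X Z) - hg_symm (A X W) (A Y Z)
  -- pair symmetry
  have hpair : ∀ X Y Z W : V₀, g (R X Y Z) W = g (R Z W X) Y := by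
    intro X Y Z W
    rw [hRg, hRg]
    have e1 : g (A Z Y) (A W X) = g (A X W) (A Y Z) := by
      rw [hA_symm Z Y, hA_symm W X, hg_symm]
    have e2 : g (A W Y) (A Z X) = g (A Y W) (A X Z) := by
      rw [hA_symm W Y, hA_symm Z X, hg_symm]
    linear_combination L₁ * (g Y Z * hg_symm X W + g W X * hg_symm Y Z
      - g Y W * hg_symm X Z - g Z X * hg_symm Y W) + e1 - e2
  -- the key identity: R(A X X, X) = 0
  have hkey : ∀ X Y : V₀, R (A X X) X Y = 0 := by
    intro X Y
    apply hg_nondeg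
    intro U
    have h1 : g (R (A X X) X Y) U = g (R Y U (A X X)) X := hpair _ _ _ _
    have h2 : R Y U (A X X) = A (R Y U X) X + A X (R Y U X) := hRinv X X Y U
    have h3 : g (A (R Y U X) X) X = g (R Y U X) (A X X) := hcub _ _ _
    have h4 : g (A X (R Y U X)) X = g (R Y U X) (A X X) := by
      rw [hA_symm]; exact hcub _ _ _
    have h5 : g (R Y U X) (A X X) = - g (R Y U (A X X)) X := by
      rw [hanti Y U X (A X X)]
    have h6 : g (R Y U (A X X)) X = -2 * g (R Y U (A X X)) X := by
      calc g (R Y U (A X X)) X = g (A (R Y U X) X) X + g (A X (R Y U X)) X := by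
            rw [h2, map_add, LinearMap.add_apply]
        _ = -2 * g (R Y U (A X X)) X := by rw [h3, h4, h5]; ring
    have h7 : g (R Y U (A X X)) X = 0 := by linarith
    rw [h1, h7]
  refine ⟨?_, ?_, ?_, ?_⟩
  · rintro ⟨X, lam⟩
    rw [hmul]
    simp
  · rintro ⟨X, lam⟩ ⟨Y, mu⟩
    rw [hmul, hmul, hA_symm, hg_symm]
    simp only [Prod.mk.injEq]
    constructor
    · abel
    · ring
  · rintro ⟨X, lam⟩ ⟨Y, mu⟩
    rw [hmul, hmul, hmul, hmul, hmul]
    simp only [map_add, map_smul, LinearMap.add_apply, LinearMap.smul_apply,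
      smul_eq_mul, Prod.mk.injEq]
    have h1 : L₁ • (g X Y • A X X - g (A X X) Y • X)
        - A (A X X) (A X Y) + A X (A (A X X) Y) = 0 := by
      rw [← hR]; exact hkey X Y
    have hs1 : A (A X X) X = A X (A X X) := hA_symm _ _
    have hs2 : g (A X X) X = g X (A X X) := hg_symm _ _
    have hs3 : g X (A X Y) = g (A X X) Y := by
      rw [← hcub X X Y, hg_symm]
    have hs4 : g X (A Y X) = g (A X X) Y := by rw [hA_symm Y X]; exact hs3
    have hs5 : A Y X = A X Y := hA_symm Y X
    have hs6 : g Y X = g X Y := hg_symm Y X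
    have hs7 : g (A X Y) X = g (A X X) Y := hA_cubic X Y X
    have hs8 : g (A X X) (A X Y) = g X (A X (A X Y)) := hcub _ _ _
    have hs9 : g (A X Y) (A X X) = g X (A X (A X Y)) := by
      rw [hg_symm]; exact hs8
    have hs10 : g X (A (A X X) Y) = g (A X Y) (A X X) := by
      rw [← hcub X (A X X) Y]; exact hA_cubic X (A X X) Y
    constructor
    · linear_combination (norm := module) h1 - (mu : ℝ) • hs1
    · linear_combination L₁ * mu * hs2 + L₁ * hs8 - L₁ * hs9 - L₁ * hs10
  · rintro ⟨Y, mu⟩ hv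
    have h := hv ((0 : V₀), (1 : ℝ))
    rw [hmul] at h
    simpa using h
end

section
/- Under these hypotheses, with n := dim V₀ and ⟨u,v⟩ := tr(T_{u∘v}) where T_w ∈ End(V) is T_w(u) := w∘u, one has for all X,Y ∈ V₀: ⟨(X,0),(Y,0)⟩ = −(n+1)L₁·g(X,Y), ⟨(X,0),e⟩ = 0, and ⟨e,e⟩ = n+1. In particular, the symmetric bilinear form ⟨·,·⟩ on V is nondegenerate if and only if L₁ ≠ 0. -/
open LinearMap Module

/-- Trace of `T_w` equals `(n+1) * c` where `c` is the second component of `w`. -/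
lemma trace_mul_eq
    (V₀ : Type*) [AddCommGroup V₀] [Module ℝ V₀] [FiniteDimensional ℝ V₀]
    (g : V₀ →ₗ[ℝ] V₀ →ₗ[ℝ] ℝ)
    (A : V₀ →ₗ[ℝ] V₀ →ₗ[ℝ] V₀)
    (hA_apolar : ∀ X : V₀, LinearMap.trace ℝ V₀ (A X) = 0)
    (L₁ : ℝ)
    (mul : (V₀ × ℝ) →ₗ[ℝ] (V₀ × ℝ) →ₗ[ℝ] (V₀ × ℝ))
    (hmul : ∀ (X Y : V₀) (lam mu : ℝ),
      mul (X, lam) (Y, mu) = (A X Y + mu • X + lam • Y, lam * mu - L₁ * g X Y))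
    (W : V₀) (c : ℝ) :
    LinearMap.trace ℝ (V₀ × ℝ) (mul (W, c)) = ((Module.finrank ℝ V₀ : ℝ) + 1) * c := by
  set f := mul (W, c) with hf
  have hdecomp : f = (LinearMap.inl ℝ V₀ ℝ) ∘ₗ ((LinearMap.fst ℝ V₀ ℝ) ∘ₗ f)
      + (LinearMap.inr ℝ V₀ ℝ) ∘ₗ ((LinearMap.snd ℝ V₀ ℝ) ∘ₗ f) := by
    ext v <;> simp
  have h1 : ((LinearMap.fst ℝ V₀ ℝ) ∘ₗ f) ∘ₗ (LinearMap.inl ℝ V₀ ℝ)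
      = A W + c • LinearMap.id := by
    ext X
    simp [hf, hmul W X c 0]
  have h2 : ((LinearMap.snd ℝ V₀ ℝ) ∘ₗ f) ∘ₗ (LinearMap.inr ℝ V₀ ℝ)
      = c • LinearMap.id := by
    apply LinearMap.ext_ring
    simp [hf, hmul W 0 c 1]
  calc LinearMap.trace ℝ (V₀ × ℝ) f
      = LinearMap.trace ℝ (V₀ × ℝ) ((LinearMap.inl ℝ V₀ ℝ) ∘ₗ ((LinearMap.fst ℝ V₀ ℝ) ∘ₗ f))
        + LinearMap.trace ℝ (V₀ × ℝ) ((LinearMap.inr ℝ V₀ ℝ) ∘ₗ ((LinearMap.snd ℝ V₀ ℝ) ∘ₗ f)) := by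
        rw [← map_add]; exact congrArg _ hdecomp
    _ = LinearMap.trace ℝ V₀ (((LinearMap.fst ℝ V₀ ℝ) ∘ₗ f) ∘ₗ (LinearMap.inl ℝ V₀ ℝ))
        + LinearMap.trace ℝ ℝ (((LinearMap.snd ℝ V₀ ℝ) ∘ₗ f) ∘ₗ (LinearMap.inr ℝ V₀ ℝ)) := by
        rw [LinearMap.trace_comp_comm' ((LinearMap.fst ℝ V₀ ℝ) ∘ₗ f) (LinearMap.inl ℝ V₀ ℝ),
          LinearMap.trace_comp_comm' ((LinearMap.snd ℝ V₀ ℝ) ∘ₗ f) (LinearMap.inr ℝ V₀ ℝ)]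
    _ = ((Module.finrank ℝ V₀ : ℝ) + 1) * c := by
        rw [h1, h2, map_add, hA_apolar, map_smul, map_smul, LinearMap.trace_id,
          LinearMap.trace_id, Module.finrank_self]
        simp [smul_eq_mul]
        ring

/-- For the Jordan product on `V = V₀ × ℝ` built from the Fubini–Pick
form `A` (satisfying apolarity), the metric `g` and the constant `L₁`, the trace
form `⟨u,v⟩ = tr T_{u∘v}` satisfies `⟨X,Y⟩ = -(n+1)L₁ g(X,Y)`, `⟨X,e⟩ = 0` and
`⟨e,e⟩ = n+1` (with `n = dim V₀`); in particular it is nondegenerate iff `L₁ ≠ 0`. -/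
theorem statement1
    (V₀ : Type*) [AddCommGroup V₀] [Module ℝ V₀] [FiniteDimensional ℝ V₀]
    [Nontrivial V₀]
    (g : V₀ →ₗ[ℝ] V₀ →ₗ[ℝ] ℝ)
    (hg_symm : ∀ X Y : V₀, g X Y = g Y X)
    (hg_nondeg : ∀ X : V₀, (∀ Y : V₀, g X Y = 0) → X = 0)
    (A : V₀ →ₗ[ℝ] V₀ →ₗ[ℝ] V₀)
    (hA_symm : ∀ X Y : V₀, A X Y = A Y X)
    (hA_cubic : ∀ X Y Z : V₀, g (A X Y) Z = g (A X Z) Y)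
    (hA_apolar : ∀ X : V₀, LinearMap.trace ℝ V₀ (A X) = 0)
    (L₁ : ℝ)
    (mul : (V₀ × ℝ) →ₗ[ℝ] (V₀ × ℝ) →ₗ[ℝ] (V₀ × ℝ))
    (hmul : ∀ (X Y : V₀) (lam mu : ℝ),
      mul (X, lam) (Y, mu) = (A X Y + mu • X + lam • Y, lam * mu - L₁ * g X Y)) :
    (∀ X Y : V₀,
      LinearMap.trace ℝ (V₀ × ℝ) (mul (mul (X, (0 : ℝ)) (Y, (0 : ℝ))))
        = -((Module.finrank ℝ V₀ : ℝ) + 1) * L₁ * g X Y) ∧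
    (∀ X : V₀,
      LinearMap.trace ℝ (V₀ × ℝ) (mul (mul (X, (0 : ℝ)) ((0 : V₀), (1 : ℝ)))) = 0) ∧
    (LinearMap.trace ℝ (V₀ × ℝ) (mul (mul ((0 : V₀), (1 : ℝ)) ((0 : V₀), (1 : ℝ))))
        = (Module.finrank ℝ V₀ : ℝ) + 1) ∧
    ((∀ u : V₀ × ℝ,
        (∀ v : V₀ × ℝ, LinearMap.trace ℝ (V₀ × ℝ) (mul (mul u v)) = 0) → u = 0)
      ↔ L₁ ≠ 0) := by
  have key : ∀ (X Y : V₀) (lam mu : ℝ),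
      LinearMap.trace ℝ (V₀ × ℝ) (mul (mul (X, lam) (Y, mu)))
        = ((Module.finrank ℝ V₀ : ℝ) + 1) * (lam * mu - L₁ * g X Y) := by
    intro X Y lam mu
    rw [hmul]
    exact trace_mul_eq V₀ g A hA_apolar L₁ mul hmul _ _
  have hn1 : ((Module.finrank ℝ V₀ : ℝ) + 1) ≠ 0 := by positivity
  refine ⟨fun X Y => by rw [key]; ring, fun X => by rw [key]; simp, by rw [key]; simp, ?_⟩
  constructor
  · intro h hL
    obtain ⟨X, hX⟩ := exists_ne (0 : V₀)
    have := h (X, 0) (fun v => by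
      obtain ⟨Y, mu⟩ := v
      rw [key, hL]; ring)
    exact hX (by simpa using congrArg Prod.fst this)
  · rintro hL ⟨X, lam⟩ h
    have hlam : lam = 0 := by
      have := h ((0 : V₀), 1)
      rw [key] at this
      have := (mul_eq_zero.1 this).resolve_left hn1
      simpa using this
    have hX : X = 0 := by
      apply hg_nondeg
      intro Y
      have := h (Y, 0)
      rw [key, hlam] at this
      have h2 := (mul_eq_zero.1 this).resolve_left hn1
      have : L₁ * g X Y = 0 := by linarith [h2]
      exact (mul_eq_zero.1 this).resolve_left hL
    simp [hX, hlam]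
end

section
/- Under these hypotheses, for all X,Y,Z ∈ V₀ one has (X,0)∘((Y,0)∘(Z,0)) − (Y,0)∘((X,0)∘(Z,0)) = (−R(X,Y)Z, 0); moreover (X,0)∘((Y,0)∘(0,μ)) − (Y,0)∘((X,0)∘(0,μ)) = 0 for all μ ∈ ℝ. That is, the commutator ⁅T_{(X,0)}, T_{(Y,0)}⁆ of multiplication operators equals −R(X,Y) extended to V by R(X,Y)e = 0. -/
/-- For the Jordan product on `V = V₀ × ℝ` built from `A`, `g`, `L₁`,
the commutator of multiplication operators satisfies
`⁅T_{(X,0)}, T_{(Y,0)}⁆ = -R(X,Y)` extended to `V` by `R(X,Y)e = 0`, where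
`R(X,Y)Z = L₁(g(Y,Z)X - g(X,Z)Y) - A(X,A(Y,Z)) + A(Y,A(X,Z))`. -/
theorem statement2
    (V₀ : Type*) [AddCommGroup V₀] [Module ℝ V₀] [FiniteDimensional ℝ V₀]
    (g : V₀ →ₗ[ℝ] V₀ →ₗ[ℝ] ℝ)
    (hg_symm : ∀ X Y : V₀, g X Y = g Y X)
    (hg_nondeg : ∀ X : V₀, (∀ Y : V₀, g X Y = 0) → X = 0)
    (A : V₀ →ₗ[ℝ] V₀ →ₗ[ℝ] V₀)
    (hA_symm : ∀ X Y : V₀, A X Y = A Y X)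
    (hA_cubic : ∀ X Y Z : V₀, g (A X Y) Z = g (A X Z) Y)
    (L₁ : ℝ)
    (R : V₀ → V₀ → Module.End ℝ V₀)
    (hR : ∀ X Y Z : V₀,
      R X Y Z = L₁ • (g Y Z • X - g X Z • Y) - A X (A Y Z) + A Y (A X Z))
    (mul : (V₀ × ℝ) →ₗ[ℝ] (V₀ × ℝ) →ₗ[ℝ] (V₀ × ℝ))
    (hmul : ∀ (X Y : V₀) (lam mu : ℝ),
      mul (X, lam) (Y, mu) = (A X Y + mu • X + lam • Y, lam * mu - L₁ * g X Y)) :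
    (∀ X Y Z : V₀,
      mul (X, (0 : ℝ)) (mul (Y, (0 : ℝ)) (Z, (0 : ℝ)))
          - mul (Y, (0 : ℝ)) (mul (X, (0 : ℝ)) (Z, (0 : ℝ)))
        = (-(R X Y Z), (0 : ℝ))) ∧
    (∀ (X Y : V₀) (mu : ℝ),
      mul (X, (0 : ℝ)) (mul (Y, (0 : ℝ)) ((0 : V₀), mu))
          - mul (Y, (0 : ℝ)) (mul (X, (0 : ℝ)) ((0 : V₀), mu))
        = (0 : V₀ × ℝ)) ∧
    (∀ X Y : V₀,
      ⁅(mul (X, (0 : ℝ)) : Module.End ℝ (V₀ × ℝ)),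
        (mul (Y, (0 : ℝ)) : Module.End ℝ (V₀ × ℝ))⁆
        = LinearMap.prod ((-(R X Y) : V₀ →ₗ[ℝ] V₀).comp (LinearMap.fst ℝ V₀ ℝ))
            (0 : (V₀ × ℝ) →ₗ[ℝ] ℝ)) := by

  have hsym : ∀ X Y Z : V₀, g X (A Y Z) = g Y (A X Z) := by
    intro X Y Z
    rw [hg_symm, hA_cubic, hA_symm Y X, hA_cubic, hg_symm]
  have key1 : ∀ X Y Z : V₀,
      mul (X, (0 : ℝ)) (mul (Y, (0 : ℝ)) (Z, (0 : ℝ)))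
          - mul (Y, (0 : ℝ)) (mul (X, (0 : ℝ)) (Z, (0 : ℝ)))
        = (-(R X Y Z), (0 : ℝ)) := by
    intro X Y Z
    simp only [hmul, hR, zero_smul, add_zero, zero_mul, mul_zero, zero_sub, smul_zero,
      map_add, map_smul, map_neg, map_sub, neg_smul]
    refine Prod.ext ?_ ?_
    · simp only [Prod.fst_sub]
      module
    · simp only [Prod.snd_sub]
      rw [hsym X Y Z]
      ring
  have key2 : ∀ (X Y : V₀) (mu : ℝ),
      mul (X, (0 : ℝ)) (mul (Y, (0 : ℝ)) ((0 : V₀), mu))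
          - mul (Y, (0 : ℝ)) (mul (X, (0 : ℝ)) ((0 : V₀), mu))
        = (0 : V₀ × ℝ) := by
    intro X Y mu
    simp only [hmul, zero_smul, add_zero, zero_mul, mul_zero, zero_sub, smul_zero,
      map_zero, map_smul, zero_add, map_add]
    refine Prod.ext ?_ ?_
    · simp only [Prod.fst_sub, Prod.fst_zero]
      rw [hA_symm X Y]
      module
    · simp only [Prod.snd_sub, Prod.snd_zero]
      rw [hg_symm X Y]
      ring
  refine ⟨key1, key2, ?_⟩
  intro X Y
  apply LinearMap.ext
  rintro ⟨Z, mu⟩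
  have hz : ((Z, mu) : V₀ × ℝ) = (Z, (0:ℝ)) + ((0:V₀), mu) := by simp
  have lhs : (⁅(mul (X, (0 : ℝ)) : Module.End ℝ (V₀ × ℝ)),
      (mul (Y, (0 : ℝ)) : Module.End ℝ (V₀ × ℝ))⁆ : Module.End ℝ (V₀ × ℝ)) (Z, mu)
      = (-(R X Y Z), (0 : ℝ)) := by
    rw [LieRing.of_associative_ring_bracket]
    show mul (X, (0:ℝ)) (mul (Y, (0:ℝ)) (Z, mu)) - mul (Y, (0:ℝ)) (mul (X, (0:ℝ)) (Z, mu)) = _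
    rw [hz, map_add, map_add, map_add, map_add, add_sub_add_comm, key1 X Y Z,
      key2 X Y mu, add_zero]
  rw [lhs]
  simp
end

section
/- Let J be a real commutative Jordan algebra with unity e, and let 𝔨 be the Lie subalgebra of gl(J) generated by {⁅L_u,L_v⁆ : u,v ∈ J}. Then for every Φ ∈ 𝔨 and every u ∈ J, ⁅Φ, L_u⁆ = L_{Φ(u)} as endomorphisms of J. -/
attribute [local instance 100] LieRing.ofAssociativeRing

/-- Linearized Jordan identity (pointwise, four variables). -/
private lemma jordanT
    (J : Type*) [AddCommGroup J] [Module ℝ J]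
    (mul : J →ₗ[ℝ] J →ₗ[ℝ] J)
    (hcomm : ∀ u v : J, mul u v = mul v u)
    (hjordan : ∀ u v : J, mul u (mul (mul u u) v) = mul (mul u u) (mul u v)) :
    ∀ a b c d : J,
      mul a (mul (mul b c) d) + mul b (mul (mul a c) d) + mul c (mul (mul a b) d)
        - mul (mul b c) (mul a d) - mul (mul a c) (mul b d)
        - mul (mul a b) (mul c d) = 0 := by
  intro a b c d
  set S := mul a (mul (mul b c) d) + mul b (mul (mul a c) d) + mul c (mul (mul a b) d)
        - mul (mul b c) (mul a d) - mul (mul a c) (mul b d)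
        - mul (mul a b) (mul c d) with hS
  have key : S + S = 0 := by
    have h1 := hjordan (a + b + c) d
    have h2 := hjordan (a + b) d
    have h3 := hjordan (a + c) d
    have h4 := hjordan (b + c) d
    have h5 := hjordan a d
    have h6 := hjordan b d
    have h7 := hjordan c d
    simp only [map_add, LinearMap.add_apply] at h1 h2 h3 h4
    rw [hS]
    simp only [hcomm] at h1 h2 h3 h4 h5 h6 h7 ⊢
    linear_combination (norm := abel) h1 - h2 - h3 - h4 + h5 + h6 + h7
  have h2 : (2 : ℝ) • S = 0 := by rw [two_smul]; exact key
  have := (smul_eq_zero.mp h2).resolve_left (by norm_num)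
  simpa [hS] using this

/-- The commutator `⁅L_a, L_b⁆` acts as a derivation: operator identity. -/
private lemma genId
    (J : Type*) [AddCommGroup J] [Module ℝ J]
    (mul : J →ₗ[ℝ] J →ₗ[ℝ] J)
    (hcomm : ∀ u v : J, mul u v = mul v u)
    (hjordan : ∀ u v : J, mul u (mul (mul u u) v) = mul (mul u u) (mul u v)) :
    ∀ a b c : J,
      ⁅⁅(mul a : Module.End ℝ J), (mul b : Module.End ℝ J)⁆, (mul c : Module.End ℝ J)⁆
        = mul (mul a (mul b c) - mul b (mul a c)) := by
  intro a b c
  ext d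
  have t1 := jordanT J mul hcomm hjordan a c d b
  have t2 := jordanT J mul hcomm hjordan b c d a
  simp only [Ring.lie_def, LinearMap.sub_apply, Module.End.mul_apply, map_sub, mul_sub,
    sub_mul] at *
  simp only [hcomm] at t1 t2 ⊢
  linear_combination (norm := abel) t1 - t2

/-- In a unital real commutative Jordan algebra, for every `Φ` in the
Lie subalgebra 𝔨 of `gl(J)` generated by the commutators `⁅L_u,L_v⁆` and every
`u ∈ J`, one has `⁅Φ, L_u⁆ = L_{Φ(u)}`. -/
theorem statement9
    (J : Type*) [AddCommGroup J] [Module ℝ J]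
    (mul : J →ₗ[ℝ] J →ₗ[ℝ] J)
    (hcomm : ∀ u v : J, mul u v = mul v u)
    (hjordan : ∀ u v : J, mul u (mul (mul u u) v) = mul (mul u u) (mul u v))
    (e : J) (he : ∀ v : J, mul e v = v) :
    ∀ Φ ∈ LieSubalgebra.lieSpan ℝ (Module.End ℝ J)
        {f : Module.End ℝ J | ∃ u v : J,
          f = ⁅(mul u : Module.End ℝ J), (mul v : Module.End ℝ J)⁆},
      ∀ u : J, ⁅Φ, (mul u : Module.End ℝ J)⁆ = mul (Φ u) := by
  -- the set of Φ with the desired property is a Lie subalgebra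
  let K : LieSubalgebra ℝ (Module.End ℝ J) :=
    { carrier := {Φ : Module.End ℝ J | ∀ u : J, ⁅Φ, (mul u : Module.End ℝ J)⁆ = mul (Φ u)}
      add_mem' := by
        intro Φ Ψ hΦ hΨ u
        simp only [add_lie, LinearMap.add_apply, map_add, hΦ u, hΨ u]
      zero_mem' := by
        intro u
        simp only [zero_lie, LinearMap.zero_apply, map_zero]
      smul_mem' := by
        intro t Φ hΦ u
        simp only [smul_lie, LinearMap.smul_apply, map_smul, hΦ u]
      lie_mem' := by
        intro Φ Ψ hΦ hΨ u
        rw [lie_lie, hΨ u, hΦ u, hΦ (Ψ u), hΨ (Φ u)]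
        simp only [Ring.lie_def, Module.End.mul_apply, LinearMap.sub_apply, map_sub] }
  have hK : LieSubalgebra.lieSpan ℝ (Module.End ℝ J)
      {f : Module.End ℝ J | ∃ u v : J,
          f = ⁅(mul u : Module.End ℝ J), (mul v : Module.End ℝ J)⁆} ≤ K := by
    rw [LieSubalgebra.lieSpan_le]
    rintro f ⟨x, y, rfl⟩
    intro u
    rw [genId J mul hcomm hjordan x y u]
    rfl
  intro Φ hΦ u
  exact hK hΦ u
end

section
/- Let J be a finite-dimensional semisimple real commutative Jordan algebra with unity e, V₀ := {u ∈ J : tr(L_u) = 0}, 𝔭 := {L_X : X ∈ V₀}, 𝔨 the Lie subalgebra of gl(J) generated by {⁅L_X,L_Y⁆ : X,Y ∈ V₀}, and 𝔤 := 𝔨 + 𝔭 (the restricted structure Lie algebra). Then 𝔤 is a Lie subalgebra of gl(J) with ⁅𝔨,𝔭⁆ ⊆ 𝔭, ⁅𝔭,𝔭⁆ ⊆ 𝔨 and 𝔨 ∩ 𝔭 = {0}, so (𝔤,𝔨) is a symmetric pair of Lie algebras; moreover the pair is effective: every Lie ideal of 𝔤 contained in 𝔨 is zero. -/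
attribute [local instance 100] LieRing.ofAssociativeRing

section aux
variable {J : Type*} [AddCommGroup J] [Module ℝ J]
variable (mul : J →ₗ[ℝ] J →ₗ[ℝ] J)

lemma lin_aux (hcomm : ∀ u v : J, mul u v = mul v u)
    (hjordan : ∀ u v : J, mul u (mul (mul u u) v) = mul (mul u u) (mul u v))
    (a b c v : J) :
    mul a (mul (mul b c) v) + mul b (mul (mul a c) v) + mul c (mul (mul a b) v)
      = mul (mul b c) (mul a v) + mul (mul a c) (mul b v) + mul (mul a b) (mul c v) := by
  have H : ∀ u : J, mul u (mul (mul u u) v) = mul (mul u u) (mul u v) := fun u => hjordan u v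
  have h1 := H (a + b + c)
  have h2 := H (a + b)
  have h3 := H (b + c)
  have h4 := H (a + c)
  have h5 := H a
  have h6 := H b
  have h7 := H c
  simp only [map_add, LinearMap.add_apply] at h1 h2 h3 h4
  simp only [hcomm b a, hcomm c a, hcomm c b] at h1 h2 h3 h4
  apply smul_right_injective J (two_ne_zero (α := ℝ))
  simp only [smul_add]
  linear_combination (norm := module) h1 - h2 - h3 - h4 + h5 + h6 + h7

lemma deriv_aux (hcomm : ∀ u v : J, mul u v = mul v u)
    (hjordan : ∀ u v : J, mul u (mul (mul u u) v) = mul (mul u u) (mul u v))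
    (x y b : J) :
    ⁅⁅(mul x : Module.End ℝ J), mul y⁆, mul b⁆
      = mul (⁅(mul x : Module.End ℝ J), mul y⁆ b) := by
  ext c
  simp only [Ring.lie_def, LinearMap.sub_apply, Module.End.mul_apply, map_sub]
  have l1 := lin_aux mul hcomm hjordan x b c y
  have l2 := lin_aux mul hcomm hjordan y b c x
  simp only [hcomm] at l1 l2 ⊢
  linear_combination (norm := module) l1 - l2

/-- The Lie subalgebra of "derivations of `mul` killing `e`". -/
def goodSub (e : J) : LieSubalgebra ℝ (Module.End ℝ J) where
  carrier := {f | (∀ b : J, ⁅f, (mul b : Module.End ℝ J)⁆ = mul (f b)) ∧ f e = 0}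
  add_mem' := by
    rintro f g ⟨hf1, hf2⟩ ⟨hg1, hg2⟩
    refine ⟨fun b => ?_, ?_⟩
    · rw [add_lie, hf1 b, hg1 b, LinearMap.add_apply, map_add]
    · simp [LinearMap.add_apply, hf2, hg2]
  zero_mem' := by
    refine ⟨fun b => ?_, rfl⟩
    simp
  smul_mem' := by
    rintro r f ⟨hf1, hf2⟩
    refine ⟨fun b => ?_, ?_⟩
    · rw [smul_lie, hf1 b, LinearMap.smul_apply, map_smul]
    · simp [hf2]
  lie_mem' := by
    rintro f g ⟨hf1, hf2⟩ ⟨hg1, hg2⟩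
    refine ⟨fun b => ?_, ?_⟩
    · rw [lie_lie, hf1, hg1, hf1, hg1]
      have : ⁅f, g⁆ b = f (g b) - g (f b) := by
        simp [Ring.lie_def, LinearMap.sub_apply, Module.End.mul_apply]
      rw [this, map_sub]
    · simp [Ring.lie_def, LinearMap.sub_apply, Module.End.mul_apply, hf2, hg2]

end aux

/-- For a finite-dimensional semisimple unital real commutative
Jordan algebra, with `V₀ = {u : tr L_u = 0}`, `𝔭 = {L_X : X ∈ V₀}`, 𝔨 the Lie
subalgebra generated by `{⁅L_X,L_Y⁆ : X,Y ∈ V₀}` and `𝔤 = 𝔨 + 𝔭` (the restricted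
structure Lie algebra): 𝔤 is a Lie subalgebra of `gl(J)` with `⁅𝔨,𝔭⁆ ⊆ 𝔭`,
`⁅𝔭,𝔭⁆ ⊆ 𝔨` and `𝔨 ∩ 𝔭 = {0}`, so `(𝔤,𝔨)` is a symmetric pair; moreover the pair
is effective: every Lie ideal of 𝔤 contained in 𝔨 is zero. -/
theorem statement12
    (J : Type*) [AddCommGroup J] [Module ℝ J] [FiniteDimensional ℝ J]
    (mul : J →ₗ[ℝ] J →ₗ[ℝ] J)
    (hcomm : ∀ u v : J, mul u v = mul v u)
    (hjordan : ∀ u v : J, mul u (mul (mul u u) v) = mul (mul u u) (mul u v))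
    (e : J) (he : ∀ v : J, mul e v = v)
    (hss : ∀ u : J, (∀ v : J, LinearMap.trace ℝ J (mul (mul u v)) = 0) → u = 0)
    (V₀ : Submodule ℝ J)
    (hV₀ : ∀ u : J, u ∈ V₀ ↔ LinearMap.trace ℝ J (mul u) = 0)
    (𝔨 : LieSubalgebra ℝ (Module.End ℝ J))
    (h𝔨 : 𝔨 = LieSubalgebra.lieSpan ℝ (Module.End ℝ J)
        {f : Module.End ℝ J | ∃ X ∈ V₀, ∃ Y ∈ V₀,
          f = ⁅(mul X : Module.End ℝ J), (mul Y : Module.End ℝ J)⁆})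
    (𝔭 : Submodule ℝ (Module.End ℝ J))
    (h𝔭 : ∀ f : Module.End ℝ J, f ∈ 𝔭 ↔ ∃ X ∈ V₀, f = mul X)
    (𝔤 : Submodule ℝ (Module.End ℝ J))
    (h𝔤 : ∀ f : Module.End ℝ J, f ∈ 𝔤 ↔ ∃ k ∈ 𝔨, ∃ p ∈ 𝔭, f = k + p) :
    (∀ f ∈ 𝔤, ∀ g ∈ 𝔤, ⁅f, g⁆ ∈ 𝔤) ∧
    (∀ k ∈ 𝔨, ∀ p ∈ 𝔭, ⁅k, p⁆ ∈ 𝔭) ∧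
    (∀ p ∈ 𝔭, ∀ q ∈ 𝔭, ⁅p, q⁆ ∈ 𝔨) ∧
    (∀ f : Module.End ℝ J, f ∈ 𝔨 → f ∈ 𝔭 → f = 0) ∧
    (∀ 𝔥 : Submodule ℝ (Module.End ℝ J), 𝔥 ≤ 𝔤 →
      (∀ h ∈ 𝔥, h ∈ 𝔨) → (∀ f ∈ 𝔤, ∀ h ∈ 𝔥, ⁅f, h⁆ ∈ 𝔥) → 𝔥 = ⊥) := by
  have hLe : ∀ u : J, mul u e = u := fun u => by rw [hcomm]; exact he u
  -- every element of 𝔨 is a derivation killing e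
  have hK : 𝔨 ≤ goodSub mul e := by
    rw [h𝔨]
    apply (LieSubalgebra.lieSpan_le).mpr
    rintro f ⟨X, hX, Y, hY, rfl⟩
    refine ⟨deriv_aux mul hcomm hjordan X Y, ?_⟩
    simp [Ring.lie_def, LinearMap.sub_apply, Module.End.mul_apply, hLe, hcomm X Y]
  have hKprop : ∀ f ∈ 𝔨,
      (∀ b : J, ⁅f, (mul b : Module.End ℝ J)⁆ = mul (f b)) ∧ f e = 0 := fun f hf => hK hf
  -- trace of a commutator vanishes
  have htr : ∀ f g : Module.End ℝ J, LinearMap.trace ℝ J ⁅f, g⁆ = 0 := by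
    intro f g
    rw [Ring.lie_def, map_sub, LinearMap.trace_mul_comm, sub_self]
  -- claim 2
  have claim2 : ∀ k ∈ 𝔨, ∀ p ∈ 𝔭, ⁅k, p⁆ ∈ 𝔭 := by
    intro k hk p hp
    obtain ⟨X, hX, rfl⟩ := (h𝔭 p).mp hp
    have hd := (hKprop k hk).1 X
    rw [hd]
    refine (h𝔭 _).mpr ⟨k X, (hV₀ _).mpr ?_, rfl⟩
    rw [← hd]; exact htr k (mul X)
  -- claim 3
  have claim3 : ∀ p ∈ 𝔭, ∀ q ∈ 𝔭, ⁅p, q⁆ ∈ 𝔨 := by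
    intro p hp q hq
    obtain ⟨X, hX, rfl⟩ := (h𝔭 p).mp hp
    obtain ⟨Y, hY, rfl⟩ := (h𝔭 q).mp hq
    rw [h𝔨]
    exact LieSubalgebra.subset_lieSpan ⟨X, hX, Y, hY, rfl⟩
  -- claim 4
  have claim4 : ∀ f : Module.End ℝ J, f ∈ 𝔨 → f ∈ 𝔭 → f = 0 := by
    intro f hfk hfp
    obtain ⟨X, hX, rfl⟩ := (h𝔭 f).mp hfp
    have he0 := (hKprop _ hfk).2
    have hX0 : X = 0 := by rw [← he X, hcomm e X]; exact he0
    rw [hX0, map_zero]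
  -- claim 1
  have claim1 : ∀ f ∈ 𝔤, ∀ g ∈ 𝔤, ⁅f, g⁆ ∈ 𝔤 := by
    intro f hf g hg
    obtain ⟨k, hk, p, hp, rfl⟩ := (h𝔤 f).mp hf
    obtain ⟨k', hk', p', hp', rfl⟩ := (h𝔤 g).mp hg
    have hsplit : ⁅k + p, k' + p'⁆ = (⁅k, k'⁆ + ⁅p, p'⁆) + (⁅k, p'⁆ + ⁅p, k'⁆) := by
      simp only [lie_add, add_lie]; abel
    rw [hsplit]
    refine (h𝔤 _).mpr ⟨_, 𝔨.add_mem (𝔨.lie_mem hk hk') (claim3 p hp p' hp'),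
      _, 𝔭.add_mem (claim2 k hk p' hp') ?_, rfl⟩
    rw [← lie_skew]
    exact 𝔭.neg_mem (claim2 k' hk' p hp)
  refine ⟨claim1, claim2, claim3, claim4, ?_⟩
  -- effectiveness
  intro 𝔥 hsub hkk hinv
  rw [Submodule.eq_bot_iff]
  intro h hh
  have hgood := hKprop h (hkk h hh)
  have hV : ∀ X ∈ V₀, h X = 0 := by
    intro X hX
    have hmX𝔤 : (mul X : Module.End ℝ J) ∈ 𝔤 :=
      (h𝔤 _).mpr ⟨0, 𝔨.zero_mem, mul X, (h𝔭 _).mpr ⟨X, hX, rfl⟩, (zero_add _).symm⟩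
    have hb : ⁅(mul X : Module.End ℝ J), h⁆ ∈ 𝔥 := hinv _ hmX𝔤 h hh
    have heq : ⁅(mul X : Module.End ℝ J), h⁆ = mul (-(h X)) := by
      rw [← lie_skew, hgood.1 X, map_neg]
    have hmem : -(h X) ∈ V₀ := by
      refine (hV₀ _).mpr ?_
      rw [map_neg, map_neg, ← hgood.1 X, htr, neg_zero]
    have hbp : ⁅(mul X : Module.End ℝ J), h⁆ ∈ 𝔭 := (h𝔭 _).mpr ⟨-(h X), hmem, heq⟩
    have hbk : ⁅(mul X : Module.End ℝ J), h⁆ ∈ 𝔨 := hkk _ hb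
    have h0 : (mul (-(h X)) : Module.End ℝ J) = 0 := by
      rw [← heq]; exact claim4 _ hbk hbp
    have : -(h X) = 0 := by
      rw [← he (-(h X)), hcomm e, h0]; rfl
    exact neg_eq_zero.mp this
  rcases subsingleton_or_nontrivial J with hs | hn
  · exact LinearMap.ext fun u => Subsingleton.elim _ _
  · have hn0 : 0 < Module.finrank ℝ J := Module.finrank_pos
    have hne : (Module.finrank ℝ J : ℝ) ≠ 0 := Nat.cast_ne_zero.mpr hn0.ne'
    have htre : LinearMap.trace ℝ J (mul e) = (Module.finrank ℝ J : ℝ) := by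
      have hid : (mul e : Module.End ℝ J) = LinearMap.id := LinearMap.ext he
      rw [hid, LinearMap.trace_id]
    apply LinearMap.ext
    intro u
    set t := LinearMap.trace ℝ J (mul u) with ht
    have hu : u - (t / (Module.finrank ℝ J : ℝ)) • e ∈ V₀ := by
      refine (hV₀ _).mpr ?_
      rw [map_sub, map_smul, map_sub, map_smul, htre, ← ht, smul_eq_mul]
      field_simp
      simp
    have h2 := hV _ hu
    rw [map_sub, map_smul, hgood.2, smul_zero, sub_zero] at h2
    simpa using h2
end

section
/- Let J be a finite-dimensional semisimple real commutative Jordan algebra with unity e and dim J = n+1, V₀ := {u ∈ J : tr(L_u) = 0}, and for X,Y ∈ V₀ define A₀(X,Y) := X∘Y − (tr(L_{X∘Y})/(n+1))·e. Then for all X,Y ∈ V₀ one has A₀(X,Y) ∈ V₀ (so each A₀(X) := A₀(X,·) is an endomorphism of V₀), and for every X ∈ V₀ the endomorphism A₀(X) of V₀ is traceless: tr(A₀(X)) = 0 (apolarity). -/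
/-- Trace of a linear map `ℝ → ℝ` is its value at `1`. -/
lemma trace_real_eq (h : ℝ →ₗ[ℝ] ℝ) : LinearMap.trace ℝ ℝ h = h 1 := by
  have : h = (h 1) • LinearMap.id := by
    ext r
    simp [← map_smul]
  rw [this, map_smul, LinearMap.trace_id]
  simp

/-- In a finite-dimensional semisimple unital real commutative
Jordan algebra of dimension `n+1`, with `A₀(X,Y) = X∘Y - (tr L_{X∘Y}/(n+1))·e`,
for `X,Y ∈ V₀ = {u : tr L_u = 0}` one has `A₀(X,Y) ∈ V₀`, and for every `X ∈ V₀`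
the endomorphism `A₀(X) : V₀ → V₀` is traceless (apolarity). -/
theorem statement14
    (J : Type*) [AddCommGroup J] [Module ℝ J] [FiniteDimensional ℝ J]
    (mul : J →ₗ[ℝ] J →ₗ[ℝ] J)
    (hcomm : ∀ u v : J, mul u v = mul v u)
    (hjordan : ∀ u v : J, mul u (mul (mul u u) v) = mul (mul u u) (mul u v))
    (e : J) (he : ∀ v : J, mul e v = v)
    (hss : ∀ u : J, (∀ v : J, LinearMap.trace ℝ J (mul (mul u v)) = 0) → u = 0)
    (n : ℕ) (hn : Module.finrank ℝ J = n + 1)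
    (V₀ : Submodule ℝ J)
    (hV₀ : ∀ u : J, u ∈ V₀ ↔ LinearMap.trace ℝ J (mul u) = 0)
    (A₀ : J →ₗ[ℝ] J →ₗ[ℝ] J)
    (hA₀ : ∀ X Y : J,
      A₀ X Y = mul X Y - (LinearMap.trace ℝ J (mul (mul X Y)) / ((n : ℝ) + 1)) • e) :
    (∀ X ∈ V₀, ∀ Y ∈ V₀, A₀ X Y ∈ V₀) ∧
    (∀ X ∈ V₀, ∀ h : ∀ y ∈ V₀, A₀ X y ∈ V₀,
      LinearMap.trace ℝ V₀ ((A₀ X).restrict h) = 0) := by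
  have hne : ((n : ℝ) + 1) ≠ 0 := by positivity
  have hLe : mul e = LinearMap.id := LinearMap.ext he
  have htre : LinearMap.trace ℝ J (mul e) = (n : ℝ) + 1 := by
    rw [hLe, LinearMap.trace_id, hn]; push_cast; ring
  -- A₀ X Y ∈ V₀ for all X Y
  have hmem : ∀ X Y : J, A₀ X Y ∈ V₀ := by
    intro X Y
    rw [hV₀, hA₀, map_sub, map_smul, map_sub, map_smul, htre]
    rw [smul_eq_mul, div_mul_cancel₀ _ hne, sub_self]
  refine ⟨fun X _ Y _ => hmem X Y, fun X hX h => ?_⟩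
  have hXtr : LinearMap.trace ℝ J (mul X) = 0 := (hV₀ X).1 hX
  -- express A₀ X as mul X minus a rank-one map
  set f : J →ₗ[ℝ] ℝ :=
    (((n : ℝ) + 1)⁻¹) • ((LinearMap.trace ℝ J).comp (mul.comp (mul X))) with hf
  have hEq : A₀ X = mul X - (LinearMap.toSpanSingleton ℝ J e).comp f := by
    ext Y
    simp [hA₀ X Y, hf, LinearMap.toSpanSingleton_apply, div_eq_inv_mul, smul_smul]
  -- trace of A₀ X over J
  have htrJ : LinearMap.trace ℝ J (A₀ X) = 0 := by
    rw [hEq, map_sub, hXtr, LinearMap.trace_comp_comm']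
    have : f.comp (LinearMap.toSpanSingleton ℝ J e) ∈ Set.univ := trivial
    rw [trace_real_eq]
    simp only [LinearMap.comp_apply, LinearMap.toSpanSingleton_apply, one_smul, hf]
    have hXe : mul X e = X := by rw [hcomm, he]
    simp [hXe, hXtr]
  -- trace over V₀ equals trace over J since range ⊆ V₀
  have hmemJ : ∀ Y : J, A₀ X Y ∈ V₀ := hmem X
  set T' : J →ₗ[ℝ] V₀ := (A₀ X).codRestrict V₀ hmemJ with hT'
  have h1 : V₀.subtype.comp T' = A₀ X := by ext Y; rfl
  have h2 : T'.comp V₀.subtype = (A₀ X).restrict h := by ext y; rfl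
  calc LinearMap.trace ℝ V₀ ((A₀ X).restrict h)
      = LinearMap.trace ℝ V₀ (T'.comp V₀.subtype) := by rw [h2]
    _ = LinearMap.trace ℝ J (V₀.subtype.comp T') := (LinearMap.trace_comp_comm' _ _).symm
    _ = 0 := by rw [h1, htrJ]
end

section
/- Under these hypotheses, the bracket on 𝔤 = 𝔨 × V₀ defined by ⁅(Φ,X), (Ψ,Y)⁆ := (⁅Φ,Ψ⁆ − R(X,Y), Φ(Y) − Ψ(X)) is bilinear, skew-symmetric, and satisfies the Jacobi identity ⁅Z₁,⁅Z₂,Z₃⁆⁆ + ⁅Z₂,⁅Z₃,Z₁⁆⁆ + ⁅Z₃,⁅Z₁,Z₂⁆⁆ = 0 for all Z₁,Z₂,Z₃ ∈ 𝔤; hence 𝔤 is a real Lie algebra containing 𝔨 × {0} as a Lie subalgebra. -/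
attribute [local instance 100] LieRing.ofAssociativeRing

/-- Given a curvature-like map `R` on `V₀` and 𝔨 the Lie subalgebra
of `gl(V₀)` generated by the `R(X,Y)`, the bracket on `𝔤 = 𝔨 × V₀` defined by
`⁅(Φ,X),(Ψ,Y)⁆ = (⁅Φ,Ψ⁆ - R(X,Y), Φ(Y) - Ψ(X))` is bilinear, skew-symmetric and
satisfies the Jacobi identity; hence 𝔤 is a real Lie algebra containing `𝔨 × {0}`
as a Lie subalgebra. -/
theorem statement15
    (V₀ : Type*) [AddCommGroup V₀] [Module ℝ V₀]
    (R : V₀ →ₗ[ℝ] V₀ →ₗ[ℝ] Module.End ℝ V₀)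
    (hskew : ∀ X Y : V₀, R X Y = -R Y X)
    (hbianchi : ∀ X Y Z : V₀, R X Y Z + R Y Z X + R Z X Y = 0)
    (hder : ∀ X Y Z W : V₀,
      ⁅R X Y, R Z W⁆ = R (R X Y Z) W + R Z (R X Y W))
    (𝔨 : LieSubalgebra ℝ (Module.End ℝ V₀))
    (h𝔨 : 𝔨 = LieSubalgebra.lieSpan ℝ (Module.End ℝ V₀)
        {f : Module.End ℝ V₀ | ∃ X Y : V₀, f = R X Y})
    (hmem : ∀ X Y : V₀, R X Y ∈ 𝔨)
    (br : (↥𝔨 × V₀) → (↥𝔨 × V₀) → (↥𝔨 × V₀))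
    (hbr : ∀ (Φ Ψ : ↥𝔨) (X Y : V₀),
      br (Φ, X) (Ψ, Y)
        = (⁅Φ, Ψ⁆ - ⟨R X Y, hmem X Y⟩,
           (Φ : Module.End ℝ V₀) Y - (Ψ : Module.End ℝ V₀) X)) :
    (∀ (a : ℝ) (Z₁ Z₁' Z₂ : ↥𝔨 × V₀),
      br (a • Z₁ + Z₁') Z₂ = a • br Z₁ Z₂ + br Z₁' Z₂) ∧
    (∀ (a : ℝ) (Z₁ Z₂ Z₂' : ↥𝔨 × V₀),
      br Z₁ (a • Z₂ + Z₂') = a • br Z₁ Z₂ + br Z₁ Z₂') ∧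
    (∀ Z₁ Z₂ : ↥𝔨 × V₀, br Z₁ Z₂ = -br Z₂ Z₁) ∧
    (∀ Z₁ Z₂ Z₃ : ↥𝔨 × V₀,
      br Z₁ (br Z₂ Z₃) + br Z₂ (br Z₃ Z₁) + br Z₃ (br Z₁ Z₂) = 0) ∧
    (∀ Φ Ψ : ↥𝔨, br (Φ, (0 : V₀)) (Ψ, (0 : V₀)) = (⁅Φ, Ψ⁆, (0 : V₀))) := by
  have hderK : ∀ Φ : ↥𝔨, ∀ Y Z : V₀,
      ⁅(Φ : Module.End ℝ V₀), R Y Z⁆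
        = R ((Φ : Module.End ℝ V₀) Y) Z + R Y ((Φ : Module.End ℝ V₀) Z) := by
    let S : LieSubalgebra ℝ (Module.End ℝ V₀) :=
      { carrier := {f | ∀ Y Z, ⁅f, R Y Z⁆ = R (f Y) Z + R Y (f Z)}
        add_mem' := by
          intro f g hf hg Y Z
          simp only [LinearMap.add_apply, add_lie, map_add]
          rw [hf Y Z, hg Y Z]
          abel
        zero_mem' := by intro Y Z; simp
        smul_mem' := by
          intro a f hf Y Z
          simp only [LinearMap.smul_apply, smul_lie, map_smul, LinearMap.smul_apply]
          rw [hf Y Z, smul_add]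
        lie_mem' := by
          intro f g hf hg Y Z
          rw [lie_lie, hf, hg, lie_add, lie_add, hf, hg, hf, hg]
          simp only [Ring.lie_def, LinearMap.sub_apply, Module.End.mul_apply, map_sub]
          abel }
    have hle : 𝔨 ≤ S := by
      rw [h𝔨]
      apply LieSubalgebra.lieSpan_le.mpr
      rintro f ⟨X, Y, rfl⟩ Y' Z'
      exact hder X Y Y' Z'
    intro Φ Y Z
    exact hle Φ.2 Y Z
  have hcoe_smul : ∀ (a : ℝ) (x : ↥𝔨), ((a • x : ↥𝔨) : Module.End ℝ V₀) = a • (x : Module.End ℝ V₀) := fun _ _ => rfl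
  have hcoe_mk : ∀ (X Y : V₀), ((⟨R X Y, hmem X Y⟩ : ↥𝔨) : Module.End ℝ V₀) = R X Y := fun _ _ => rfl
  refine ⟨?_, ?_, ?_, ?_, ?_⟩
  · rintro a ⟨Φ, X⟩ ⟨Φ', X'⟩ ⟨Ψ, Y⟩
    simp only [Prod.smul_mk, Prod.mk_add_mk, hbr, Prod.mk.injEq]
    refine ⟨Subtype.ext ?_, ?_⟩
    · simp only [LieSubalgebra.coe_bracket, AddSubgroupClass.coe_sub,
        AddMemClass.coe_add, hcoe_smul, hcoe_mk, map_add, map_smul,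
        add_lie, smul_lie, LinearMap.add_apply, LinearMap.smul_apply, smul_sub]
      abel
    · simp only [LinearMap.add_apply, LinearMap.smul_apply, map_add, map_smul,
        hcoe_smul, hcoe_mk, AddMemClass.coe_add, smul_sub]
      abel
  · rintro a ⟨Φ, X⟩ ⟨Ψ, Y⟩ ⟨Ψ', Y'⟩
    simp only [Prod.smul_mk, Prod.mk_add_mk, hbr, Prod.mk.injEq]
    refine ⟨Subtype.ext ?_, ?_⟩
    · simp only [LieSubalgebra.coe_bracket, AddSubgroupClass.coe_sub,
        AddMemClass.coe_add, hcoe_smul, hcoe_mk, map_add, map_smul,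
        lie_add, lie_smul, LinearMap.add_apply, LinearMap.smul_apply, smul_sub]
      abel
    · simp only [LinearMap.add_apply, LinearMap.smul_apply, map_add, map_smul,
        hcoe_smul, hcoe_mk, AddMemClass.coe_add, smul_sub]
      abel
  · rintro ⟨Φ, X⟩ ⟨Ψ, Y⟩
    simp only [hbr, Prod.neg_mk, Prod.mk.injEq]
    refine ⟨Subtype.ext ?_, ?_⟩
    · simp only [AddSubgroupClass.coe_sub, NegMemClass.coe_neg,
        LieSubalgebra.coe_bracket, hcoe_mk]
      rw [hskew X Y, ← lie_skew]
      abel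
    · abel
  · rintro ⟨Φ, X⟩ ⟨Ψ, Y⟩ ⟨Θ, Z⟩
    simp only [hbr, Prod.mk_add_mk, Prod.mk_eq_zero]
    have hJ : ⁅(Φ : Module.End ℝ V₀), ⁅(Ψ : Module.End ℝ V₀), (Θ : Module.End ℝ V₀)⁆⁆
        + ⁅(Ψ : Module.End ℝ V₀), ⁅(Θ : Module.End ℝ V₀), (Φ : Module.End ℝ V₀)⁆⁆
        + ⁅(Θ : Module.End ℝ V₀), ⁅(Φ : Module.End ℝ V₀), (Ψ : Module.End ℝ V₀)⁆⁆ = 0 :=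
      lie_jacobi _ _ _
    refine ⟨Subtype.ext ?_, ?_⟩
    · simp only [AddMemClass.coe_add, AddSubgroupClass.coe_sub,
        LieSubalgebra.coe_bracket, ZeroMemClass.coe_zero, lie_sub, map_sub]
      rw [hderK Φ Y Z, hderK Ψ Z X, hderK Θ X Y,
        hskew Z ((Φ : Module.End ℝ V₀) Y), hskew X ((Ψ : Module.End ℝ V₀) Z),
        hskew Y ((Θ : Module.End ℝ V₀) X), ← hJ]
      abel
    · simp only [AddSubgroupClass.coe_sub, LieSubalgebra.coe_bracket,
        LinearMap.sub_apply, Ring.lie_def, Module.End.mul_apply, map_sub]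
      have hb : R X Y Z = -(R Y Z X + R Z X Y) := by
        have h := hbianchi X Y Z
        rw [add_assoc] at h
        exact eq_neg_of_add_eq_zero_left h
      rw [hb]
      abel
  · intro Φ Ψ
    have h0 : (⟨R 0 0, hmem 0 0⟩ : ↥𝔨) = 0 := Subtype.ext (by simp)
    rw [hbr, h0, sub_zero]
    simp
end

section
/- Under these hypotheses, the Lie algebra 𝔤 = 𝔨 × V₀ with bracket ⁅(Φ,X), (Ψ,Y)⁆ := (⁅Φ,Ψ⁆ − R(X,Y), Φ(Y) − Ψ(X)) is effective relative to 𝔨: every Lie ideal 𝔥 of 𝔤 with 𝔥 ⊆ 𝔨 × {0} is zero. -/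
attribute [local instance] LieRing.ofAssociativeRing

/-- The Lie algebra `𝔤 = 𝔨 × V₀` with bracket
`⁅(Φ,X),(Ψ,Y)⁆ = (⁅Φ,Ψ⁆ - R(X,Y), Φ(Y) - Ψ(X))` is effective relative to 𝔨:
every Lie ideal 𝔥 of 𝔤 contained in `𝔨 × {0}` is zero. -/
theorem statement17
    (V₀ : Type*) [AddCommGroup V₀] [Module ℝ V₀]
    (R : V₀ →ₗ[ℝ] V₀ →ₗ[ℝ] Module.End ℝ V₀)
    (hskew : ∀ X Y : V₀, R X Y = -R Y X)
    (hbianchi : ∀ X Y Z : V₀, R X Y Z + R Y Z X + R Z X Y = 0)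
    (hder : ∀ X Y Z W : V₀,
      ⁅R X Y, R Z W⁆ = R (R X Y Z) W + R Z (R X Y W))
    (𝔨 : LieSubalgebra ℝ (Module.End ℝ V₀))
    (h𝔨 : 𝔨 = LieSubalgebra.lieSpan ℝ (Module.End ℝ V₀)
        {f : Module.End ℝ V₀ | ∃ X Y : V₀, f = R X Y})
    (hmem : ∀ X Y : V₀, R X Y ∈ 𝔨)
    (br : (↥𝔨 × V₀) → (↥𝔨 × V₀) → (↥𝔨 × V₀))
    (hbr : ∀ (Φ Ψ : ↥𝔨) (X Y : V₀),
      br (Φ, X) (Ψ, Y)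
        = (⁅Φ, Ψ⁆ - ⟨R X Y, hmem X Y⟩,
           (Φ : Module.End ℝ V₀) Y - (Ψ : Module.End ℝ V₀) X)) :
    ∀ 𝔥 : Submodule ℝ (↥𝔨 × V₀),
      (∀ z ∈ 𝔥, z.2 = 0) →
      (∀ g : ↥𝔨 × V₀, ∀ h ∈ 𝔥, br g h ∈ 𝔥) →
      𝔥 = ⊥ := by

  intro 𝔥 hsub hideal
  ext z
  simp only [Submodule.mem_bot]
  constructor
  · intro hz
    have hz2 : z.2 = 0 := hsub z hz
    have hz' : z = (z.1, (0:V₀)) := by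
      rw [← hz2]
    have key : ∀ X : V₀, (z.1 : Module.End ℝ V₀) X = 0 := by
      intro X
      have h1 : br ((0 : ↥𝔨), X) (z.1, 0) ∈ 𝔥 := by
        rw [← hz']; exact hideal _ _ hz
      have h2 := hsub _ h1
      rw [hbr] at h2
      simp only at h2
      have : ((0 : ↥𝔨) : Module.End ℝ V₀) (0:V₀) - (z.1 : Module.End ℝ V₀) X = 0 := h2
      simpa using this
    have hz1 : z.1 = 0 := by
      ext X
      exact key X
    rw [hz', hz1]; rfl
  · intro hz; rw [hz]; exact 𝔥.zero_mem
end
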